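/- Let n ≥ 3 and let v_1, …, v_n ∈ ℝ² be points in convex position (each v_j is an extreme point of P := conv{v_1,…,v_n}) whose 2n coordinates form a set of reals that is algebraically independent over ℚ. Suppose A is a real k×d matrix and b ∈ ℝ^k such that Q := {x ∈ ℝ^d : Ax ≤ b} is nonempty and bounded, and the image of Q under the projection x ↦ (x_1, x_2) onto the first two coordinates equals P. Then k² ≥ 2n; in particular k ≥ √(2n). -/

import Mathlib

open Matrix


open Polynomial

noncomputable section AlgAux

/-- Algebraicity witnessed by a real polynomial with coefficients in a set. -/
def PolyAlg (S : Set ℝ) (y : ℝ) : Prop :=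
  ∃ p : Polynomial ℝ, p ≠ 0 ∧ (∀ n, p.coeff n ∈ S) ∧ p.eval y = 0

theorem polyAlg_mono {S T : Set ℝ} (h : S ⊆ T) {y : ℝ} (hp : PolyAlg S y) : PolyAlg T y := by
  obtain ⟨p, h0, hc, he⟩ := hp
  exact ⟨p, h0, fun n => h (hc n), he⟩

theorem isAlgebraic_iff_polyAlg {R : Type*} [CommRing R] [Algebra R ℝ]
    (hinj : Function.Injective (algebraMap R ℝ)) (y : ℝ) :
    IsAlgebraic R y ↔ PolyAlg (Set.range (algebraMap R ℝ)) y := by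
  constructor
  · rintro ⟨p, hp, he⟩
    refine ⟨p.map (algebraMap R ℝ), ?_, fun n => ⟨p.coeff n, (Polynomial.coeff_map _ _).symm⟩, ?_⟩
    · intro h
      exact hp (Polynomial.map_injective _ hinj (by simpa using h))
    · rw [Polynomial.eval_map]
      rwa [Polynomial.aeval_def] at he
  · rintro ⟨p, hp, hc, he⟩
    choose g hg using fun n => hc n
    set q : Polynomial R := ∑ n ∈ p.support, Polynomial.monomial n (g n) with hq
    have hmap : q.map (algebraMap R ℝ) = p := by
      rw [hq, Polynomial.map_sum]
      simp_rw [Polynomial.map_monomial, hg]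
      exact (Polynomial.as_sum_support p).symm
    refine ⟨q, ?_, ?_⟩
    · intro h
      rw [h, Polynomial.map_zero] at hmap
      exact hp hmap.symm
    · rw [Polynomial.aeval_def, Polynomial.eval₂_eq_eval_map, hmap, he]

theorem IntermediateField.range_algebraMap_eq {F : Type*} [Field F] [Algebra F ℝ]
    (K : IntermediateField F ℝ) : Set.range (algebraMap K ℝ) = (K : Set ℝ) := by
  ext z
  constructor
  · rintro ⟨w, rfl⟩; exact w.2
  · intro hz; exact ⟨⟨z, hz⟩, rfl⟩

theorem Subalgebra.range_algebraMap_eq' {F : Type*} [CommSemiring F] [Algebra F ℝ]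
    (S : Subalgebra F ℝ) : Set.range (algebraMap S ℝ) = (S : Set ℝ) := by
  ext z
  constructor
  · rintro ⟨w, rfl⟩; exact w.2
  · intro hz; exact ⟨⟨z, hz⟩, rfl⟩

theorem isAlgebraic_IF_iff {F : Type*} [Field F] [Algebra F ℝ] (K : IntermediateField F ℝ)
    (y : ℝ) : IsAlgebraic K y ↔ PolyAlg (K : Set ℝ) y := by
  rw [isAlgebraic_iff_polyAlg (K.val.injective), IntermediateField.range_algebraMap_eq]

theorem isAlgebraic_SA_iff {F : Type*} [Field F] [Algebra F ℝ] (S : Subalgebra F ℝ)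
    (y : ℝ) : IsAlgebraic S y ↔ PolyAlg ((S : Set ℝ)) y := by
  have hinj : Function.Injective (algebraMap S ℝ) := fun a b h => Subtype.ext h
  rw [isAlgebraic_iff_polyAlg hinj, Subalgebra.range_algebraMap_eq']

/-- Denominator clearing. -/
theorem polyAlg_of_ratio (S : Subring ℝ) {D : Set ℝ}
    (hD : ∀ c ∈ D, ∃ r ∈ S, ∃ s ∈ S, s ≠ 0 ∧ c = r / s) {y : ℝ} (h : PolyAlg D y) :
    PolyAlg (S : Set ℝ) y := by
  obtain ⟨p, hp0, hc, he⟩ := h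
  choose r hr s hs hs0 hrs using fun n => hD _ (hc n)
  set d : ℝ := ∏ n ∈ p.support, s n with hd
  have hd0 : d ≠ 0 := Finset.prod_ne_zero_iff.2 fun n _ => hs0 n
  refine ⟨Polynomial.C d * p, ?_, ?_, ?_⟩
  · exact mul_ne_zero (by simpa using hd0) hp0
  · intro n
    rw [Polynomial.coeff_C_mul]
    by_cases hn : n ∈ p.support
    · have : d * p.coeff n = (∏ m ∈ p.support.erase n, s m) * r n := by
        rw [hrs n, hd, ← Finset.prod_erase_mul _ _ hn, div_eq_inv_mul, mul_assoc,
          ← mul_assoc (s n), mul_inv_cancel₀ (hs0 n), one_mul]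
      rw [this]
      exact Subring.mul_mem _ (Subring.prod_mem _ fun m _ => hs m) (hr n)
    · rw [Polynomial.notMem_support_iff.1 hn, mul_zero]
      exact Subring.zero_mem _
  · rw [Polynomial.eval_mul, Polynomial.eval_C, he, mul_zero]

end AlgAux

section Exchange

/-- Subfield of `ℝ` generated by a set. -/
noncomputable abbrev FF (X : Set ℝ) : IntermediateField ℚ ℝ := IntermediateField.adjoin ℚ X

theorem FF_carrier_insert (X : Set ℝ) (a : ℝ) :
    ((FF (insert a X)) : Set ℝ) =
      ((IntermediateField.adjoin (FF X) {a} : IntermediateField (FF X) ℝ) : Set ℝ) := by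
  have h : FF (insert a X) =
      IntermediateField.restrictScalars ℚ (IntermediateField.adjoin (FF X) {a}) := by
    have h0 := IntermediateField.adjoin_adjoin_left ℚ X {a}
    rw [Set.union_singleton] at h0
    exact h0.symm
  rw [h]
  rfl

theorem FF_insert_iff (X : Set ℝ) (a y : ℝ) :
    IsAlgebraic (FF (insert a X)) y ↔
      IsAlgebraic (IntermediateField.adjoin (FF X) {a}) y := by
  rw [isAlgebraic_IF_iff, isAlgebraic_IF_iff, FF_carrier_insert]

theorem FF_mono {X Y : Set ℝ} (h : X ⊆ Y) {y : ℝ} (hy : IsAlgebraic (FF X) y) :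
    IsAlgebraic (FF Y) y := by
  rw [isAlgebraic_IF_iff] at hy ⊢
  exact polyAlg_mono (IntermediateField.adjoin.mono ℚ _ _ h) hy

theorem clear_simple {K : IntermediateField ℚ ℝ} {a y : ℝ}
    (h : IsAlgebraic (IntermediateField.adjoin K {a}) y) :
    IsAlgebraic (Algebra.adjoin K ({a} : Set ℝ)) y := by
  rw [isAlgebraic_IF_iff] at h
  rw [isAlgebraic_SA_iff]
  refine polyAlg_of_ratio (Algebra.adjoin K ({a} : Set ℝ)).toSubring ?_ h
  intro c hc
  have hc' : c ∈ IntermediateField.adjoin K ({a} : Set ℝ) := hc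
  rw [IntermediateField.mem_adjoin_simple_iff] at hc'
  obtain ⟨r, s, hcs⟩ := hc'
  by_cases hs : (Polynomial.aeval a) s = 0
  · exact ⟨0, zero_mem _, 1, one_mem _, one_ne_zero, by rw [hcs, hs, div_zero, zero_div]⟩
  · exact ⟨_, Subalgebra.mem_toSubring.2 (aeval_mem_adjoin_singleton _ _), _,
      Subalgebra.mem_toSubring.2 (aeval_mem_adjoin_singleton _ _), hs, hcs⟩

theorem exchange_lemma {X : Set ℝ} {a x : ℝ}
    (hxt : ¬ IsAlgebraic (FF X) x) (hxa : IsAlgebraic (FF (insert a X)) x) :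
    IsAlgebraic (FF (insert x X)) a := by
  by_cases ha : IsAlgebraic (FF X) a
  · exact FF_mono (Set.subset_insert x X) ha
  set K := FF X with hK
  have hxalg : IsAlgebraic (Algebra.adjoin K ({a} : Set ℝ)) x :=
    clear_simple ((FF_insert_iff X a x).1 hxa)
  have hA : AlgebraicIndependent K (fun _ : Unit => a) :=
    algebraicIndependent_unique_type_iff.2 ha
  have hX : AlgebraicIndependent K (fun _ : Unit => x) :=
    algebraicIndependent_unique_type_iff.2 hxt
  have notind : ¬ AlgebraicIndependent K (fun o : Option Unit => o.elim x (fun _ => a)) := by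
    intro hind
    have h1 := (hA.option_iff_transcendental x).1 hind
    rw [Set.range_const] at h1
    exact h1 hxalg
  have key : IsAlgebraic (Algebra.adjoin K ({x} : Set ℝ)) a := by
    by_contra htr
    have hind2 : AlgebraicIndependent K (fun o : Option Unit => o.elim a (fun _ => x)) :=
      (hX.option_iff_transcendental a).2 (by rwa [Set.range_const])
    apply notind
    have hcomp := hind2.comp (Equiv.swap (none : Option Unit) (some ())) (Equiv.injective _)
    have heq : ((fun o : Option Unit => o.elim a (fun _ => x)) ∘
        (Equiv.swap (none : Option Unit) (some ()))) =
        (fun o : Option Unit => o.elim x (fun _ => a)) := by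
      funext o
      rcases o with _ | u
      · simp
      · rcases u; simp
    rwa [heq] at hcomp
  rw [isAlgebraic_SA_iff] at key
  rw [isAlgebraic_IF_iff, FF_carrier_insert]
  refine polyAlg_mono ?_ key
  intro z hz
  exact IntermediateField.algebra_adjoin_le_adjoin K _ hz

theorem alg_trans_insert {X : Set ℝ} {a y : ℝ} (ha : IsAlgebraic (FF X) a)
    (hy : IsAlgebraic (FF (insert a X)) y) : IsAlgebraic (FF X) y := by
  set K := FF X with hK
  rw [FF_insert_iff] at hy
  have hint : IsIntegral K a := isAlgebraic_iff_isIntegral.1 ha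
  haveI : FiniteDimensional K (IntermediateField.adjoin K {a}) := IntermediateField.adjoin.finiteDimensional hint
  haveI : Algebra.IsIntegral K (IntermediateField.adjoin K {a}) := Algebra.IsIntegral.of_finite _ _
  have hyint : IsIntegral ((IntermediateField.adjoin K {a})) y := isAlgebraic_iff_isIntegral.1 hy
  exact isAlgebraic_iff_isIntegral.2 (isIntegral_trans y hyint)

theorem not_isAlg_of_algIndep {u : Set ℝ} {x : ℝ} (hx : x ∉ u)
    (h : AlgebraicIndependent ℚ (Subtype.val : ↥(insert x u) → ℝ)) :
    ¬ IsAlgebraic (FF u) x := by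
  intro halg
  rw [isAlgebraic_IF_iff] at halg
  have hmem : ∀ q : MvPolynomial u ℚ,
      MvPolynomial.aeval (Subtype.val : u → ℝ) q ∈ Algebra.adjoin ℚ u := by
    intro q
    have h1 := Algebra.adjoin_range_eq_range_aeval ℚ (Subtype.val : u → ℝ)
    rw [Subtype.range_coe] at h1
    rw [h1]
    exact ⟨q, rfl⟩
  have halg' : IsAlgebraic (Algebra.adjoin ℚ u) x := by
    rw [isAlgebraic_SA_iff]
    refine polyAlg_of_ratio (Algebra.adjoin ℚ u).toSubring ?_ halg
    intro c hc
    have hc' : c ∈ IntermediateField.adjoin ℚ u := hc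
    rw [IntermediateField.mem_adjoin_iff] at hc'
    obtain ⟨r, s, hcs⟩ := hc'
    by_cases hs : MvPolynomial.aeval (Subtype.val : u → ℝ) s = 0
    · exact ⟨0, zero_mem _, 1, one_mem _, one_ne_zero, by rw [hcs, hs, div_zero, zero_div]⟩
    · exact ⟨_, Subalgebra.mem_toSubring.2 (hmem r), _,
        Subalgebra.mem_toSubring.2 (hmem s), hs, hcs⟩
  have hu : AlgebraicIndependent ℚ (Subtype.val : u → ℝ) := h.mono (Set.subset_insert x u)
  set g : Option u → ℝ := fun o => o.elim x (fun z => (z : ℝ)) with hg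
  have hginj : Function.Injective g := by
    rintro (_ | z) (_ | w) hzw <;> simp only [hg, Option.elim_none, Option.elim_some] at hzw
    · rfl
    · exact absurd (show x ∈ u by rw [hzw]; exact w.2) hx
    · exact absurd (show x ∈ u by rw [← hzw]; exact z.2) hx
    · exact congrArg some (Subtype.ext hzw)
  set emb : Option u → ↥(insert x u) := fun o =>
    o.elim ⟨x, Set.mem_insert x u⟩ (fun z => ⟨(z : ℝ), Set.mem_insert_of_mem _ z.2⟩) with hemb
  have hval : (Subtype.val ∘ emb) = g := by
    funext o
    rcases o with _ | z <;> rfl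
  have hembinj : Function.Injective emb := by
    intro o₁ o₂ h12
    apply hginj
    rw [← hval]
    simp only [Function.comp_apply, h12]
  have hopt : AlgebraicIndependent ℚ g := by
    have hcomp := h.comp emb hembinj
    rwa [hval] at hcomp
  have hopt' : AlgebraicIndependent ℚ (fun o : Option u => o.elim x (Subtype.val)) := hopt
  have htr : Transcendental (Algebra.adjoin ℚ (Set.range (Subtype.val : u → ℝ))) x :=
    (hu.option_iff_transcendental x).1 hopt'
  rw [Subtype.range_coe] at htr
  exact htr halg'

end Exchange

section Counting

theorem main_induction : ∀ (m : ℕ) (s : Finset ℝ), s.card ≤ m → ∀ (u : Set ℝ) (t : Finset ℝ),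
    (∀ y ∈ t, y ∉ u) →
    AlgebraicIndependent ℚ (Subtype.val : ↥(u ∪ ↑t) → ℝ) →
    (∀ y ∈ t, IsAlgebraic (FF (u ∪ ↑s)) y) → t.card ≤ m := by
  intro m
  induction m with
  | zero =>
    intro s hs u t hdisj hind halg
    rw [Nat.le_zero, Finset.card_eq_zero] at hs
    rw [Nat.le_zero, Finset.card_eq_zero]
    by_contra ht
    obtain ⟨x, hxt⟩ := Finset.nonempty_iff_ne_empty.2 ht
    have hxu : x ∉ u := hdisj x hxt
    have hins : AlgebraicIndependent ℚ (Subtype.val : ↥(insert x u) → ℝ) := by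
      refine hind.mono ?_
      intro z hz
      rcases Set.mem_insert_iff.1 hz with rfl | hz
      · exact Set.mem_union_right _ (by exact_mod_cast hxt)
      · exact Set.mem_union_left _ hz
    refine not_isAlg_of_algIndep hxu hins ?_
    have h1 := halg x hxt
    rw [hs] at h1
    rw [show (u ∪ ((↑(∅ : Finset ℝ)) : Set ℝ)) = u by simp] at h1
    exact h1
  | succ m IH =>
    intro s hs u t hdisj hind halg
    classical
    rcases Finset.eq_empty_or_nonempty t with rfl | ⟨x, hxt⟩
    · simp
    have hxu : x ∉ u := hdisj x hxt
    have hins : AlgebraicIndependent ℚ (Subtype.val : ↥(insert x u) → ℝ) := by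
      refine hind.mono ?_
      intro z hz
      rcases Set.mem_insert_iff.1 hz with rfl | hz
      · exact Set.mem_union_right _ (by exact_mod_cast hxt)
      · exact Set.mem_union_left _ hz
    have hxtr : ¬ IsAlgebraic (FF u) x := not_isAlg_of_algIndep hxu hins
    set 𝒮 := s.powerset.filter (fun s' : Finset ℝ => IsAlgebraic (FF (u ∪ (↑s' : Set ℝ))) x) with hS
    have hsS : s ∈ 𝒮 := Finset.mem_filter.2 ⟨Finset.mem_powerset_self s, halg x hxt⟩
    obtain ⟨s₀, hs₀S, hs₀min⟩ := Finset.exists_min_image 𝒮 Finset.card ⟨s, hsS⟩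
    obtain ⟨hs₀sub, hs₀alg⟩ := Finset.mem_filter.1 hs₀S
    rw [Finset.mem_powerset] at hs₀sub
    have hs₀ne : s₀.Nonempty := by
      rcases Finset.eq_empty_or_nonempty s₀ with rfl | h
      · refine absurd ?_ hxtr
        have h1 := hs₀alg
        rw [show (u ∪ ((↑(∅ : Finset ℝ)) : Set ℝ)) = u by simp] at h1
        exact h1
      · exact h
    obtain ⟨a, has₀⟩ := hs₀ne
    have has : a ∈ s := hs₀sub has₀
    have hna : ¬ IsAlgebraic (FF (u ∪ ↑(s₀.erase a))) x := by
      intro hcon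
      have hmem : s₀.erase a ∈ 𝒮 := Finset.mem_filter.2
        ⟨Finset.mem_powerset.2 ((Finset.erase_subset a s₀).trans hs₀sub), hcon⟩
      have h1 := hs₀min _ hmem
      have hlt : (s₀.erase a).card < s₀.card := Finset.card_erase_lt_of_mem has₀
      omega
    have hxa : IsAlgebraic (FF (insert a (u ∪ ↑(s₀.erase a)))) x := by
      have hseteq : insert a (u ∪ (↑(s₀.erase a) : Set ℝ)) = u ∪ ↑s₀ := by
        ext z
        simp only [Set.mem_insert_iff, Set.mem_union, Finset.coe_erase, Set.mem_diff,
          Set.mem_singleton_iff, Finset.mem_coe]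
        constructor
        · rintro (rfl | hz | ⟨hz, _⟩)
          · exact Or.inr has₀
          · exact Or.inl hz
          · exact Or.inr hz
        · rintro (hz | hz)
          · exact Or.inr (Or.inl hz)
          · by_cases hza : z = a
            · exact Or.inl hza
            · exact Or.inr (Or.inr ⟨hz, hza⟩)
      rw [hseteq]
      exact hs₀alg
    have hax := exchange_lemma hna hxa
    have hax' : IsAlgebraic (FF ((insert x u) ∪ ↑(s.erase a))) a := by
      refine FF_mono ?_ hax
      intro z hz
      simp only [Set.mem_insert_iff, Set.mem_union, Finset.coe_erase, Set.mem_diff,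
        Set.mem_singleton_iff, Finset.mem_coe] at hz ⊢
      rcases hz with rfl | hz | ⟨hz, hza⟩
      · exact Or.inl (Or.inl rfl)
      · exact Or.inl (Or.inr hz)
      · exact Or.inr ⟨hs₀sub hz, hza⟩
    have halg' : ∀ y ∈ t.erase x, IsAlgebraic (FF ((insert x u) ∪ ↑(s.erase a))) y := by
      intro y hy
      have hy' := halg y (Finset.mem_of_mem_erase hy)
      refine alg_trans_insert hax' (FF_mono ?_ hy')
      intro z hz
      simp only [Set.mem_insert_iff, Set.mem_union, Finset.coe_erase, Set.mem_diff,
        Set.mem_singleton_iff, Finset.mem_coe] at hz ⊢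
      rcases hz with hz | hz
      · exact Or.inr (Or.inl (Or.inr hz))
      · by_cases hza : z = a
        · exact Or.inl hza
        · exact Or.inr (Or.inr ⟨hz, hza⟩)
    have hcard : (s.erase a).card ≤ m := by
      have h1 := Finset.card_erase_of_mem has
      omega
    have hdisj' : ∀ y ∈ t.erase x, y ∉ insert x u := by
      intro y hy hyins
      obtain ⟨hyx, hyt⟩ := Finset.mem_erase.1 hy
      rcases Set.mem_insert_iff.1 hyins with rfl | hyu
      · exact hyx rfl
      · exact hdisj y hyt hyu
    have hind' : AlgebraicIndependent ℚ
        (Subtype.val : ↥((insert x u) ∪ ↑(t.erase x)) → ℝ) := by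
      refine hind.mono ?_
      intro z hz
      simp only [Set.mem_insert_iff, Set.mem_union, Finset.mem_coe] at hz ⊢
      rcases hz with (rfl | hz) | hz
      · exact Or.inr hxt
      · exact Or.inl hz
      · exact Or.inr (Finset.mem_of_mem_erase hz)
    have hfin := IH (s.erase a) hcard (insert x u) (t.erase x) hdisj' hind' halg'
    have h2 := Finset.card_erase_of_mem hxt
    have h3 : 1 ≤ t.card := Finset.card_pos.2 ⟨x, hxt⟩
    omega

theorem card_le_count {ι κ : Type*} [Fintype ι] [Fintype κ] (w : ι → ℝ)
    (hw : AlgebraicIndependent ℚ w) (g : κ → ℝ)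
    (halg : ∀ i, IsAlgebraic (FF (Set.range g)) (w i)) :
    Fintype.card ι ≤ Fintype.card κ := by
  classical
  have h1 : (Finset.univ.image w).card = Fintype.card ι := by
    rw [Finset.card_image_of_injective _ hw.injective, Finset.card_univ]
  have h2 : (Finset.univ.image g).card ≤ Fintype.card κ :=
    le_trans Finset.card_image_le (le_of_eq Finset.card_univ)
  have hs1 : ((Finset.univ.image w : Finset ℝ) : Set ℝ) = Set.range w := by
    rw [Finset.coe_image, Finset.coe_univ, Set.image_univ]
  have hs2 : (∅ ∪ ((Finset.univ.image g : Finset ℝ) : Set ℝ)) = Set.range g := by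
    rw [Set.empty_union, Finset.coe_image, Finset.coe_univ, Set.image_univ]
  have hmain := main_induction (Fintype.card κ) (Finset.univ.image g) h2 ∅
    (Finset.univ.image w) (fun y _ h => h) ?_ ?_
  · omega
  · have hr := hw.to_subtype_range
    refine hr.mono ?_
    intro z hz
    rw [Set.empty_union, hs1] at hz
    exact hz
  · intro y hy
    rw [Finset.mem_image] at hy
    obtain ⟨i, _, rfl⟩ := hy
    rw [show (∅ ∪ ((Finset.univ.image g : Finset ℝ) : Set ℝ)) = Set.range g from hs2]
    exact halg i

end Counting

section Polyhedral

open Matrix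

theorem det_mem {m : Type*} [Fintype m] [DecidableEq m] (M : Matrix m m ℝ)
    (R : Subalgebra ℚ ℝ) (h : ∀ i j, M i j ∈ R) : M.det ∈ R := by
  rw [Matrix.det_apply]
  exact Subalgebra.sum_mem _ fun σ _ =>
    Subalgebra.zsmul_mem _ (Subalgebra.prod_mem _ fun i _ => h _ _) _

theorem d_le_k {d k : ℕ} (A : Matrix (Fin k) (Fin d) ℝ) (b : Fin k → ℝ)
    (hne : {x : Fin d → ℝ | ∀ i, A.mulVec x i ≤ b i}.Nonempty)
    (hbd : Bornology.IsBounded {x : Fin d → ℝ | ∀ i, A.mulVec x i ≤ b i}) : d ≤ k := by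
  by_contra hdk
  push_neg at hdk
  have hnotinj : ¬ Function.Injective (Matrix.mulVecLin A) := by
    intro hinj
    have h1 := LinearMap.finrank_le_finrank_of_injective hinj
    rw [Module.finrank_fin_fun, Module.finrank_fin_fun] at h1
    omega
  rw [Function.not_injective_iff] at hnotinj
  obtain ⟨y, z, hyz, hne'⟩ := hnotinj
  set u := y - z with hu
  have hu0 : u ≠ 0 := sub_ne_zero.2 hne'
  have hAu : A.mulVec u = 0 := by
    have : Matrix.mulVecLin A u = 0 := by
      rw [hu, map_sub, hyz, sub_self]
    simpa [Matrix.mulVecLin_apply] using this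
  obtain ⟨x₀, hx₀⟩ := hne
  obtain ⟨C, hC⟩ := hbd.exists_norm_le
  have hnu : 0 < ‖u‖ := norm_pos_iff.2 hu0
  set t : ℝ := (C + ‖x₀‖ + 1) / ‖u‖ with ht
  have hmem : x₀ + t • u ∈ {x : Fin d → ℝ | ∀ i, A.mulVec x i ≤ b i} := by
    intro i
    rw [Matrix.mulVec_add, Matrix.mulVec_smul, hAu]
    simpa using hx₀ i
  have h1 := hC _ hmem
  have h2 : ‖t • u‖ ≤ ‖x₀ + t • u‖ + ‖x₀‖ := by
    have := norm_add_le (x₀ + t • u) (-x₀)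
    simpa [add_comm] using this
  have h3 : ‖t • u‖ = C + ‖x₀‖ + 1 := by
    rw [norm_smul, Real.norm_eq_abs, ht, abs_div, abs_of_pos hnu]
    rw [div_mul_cancel₀]
    · have hC0 : 0 ≤ C := le_trans (norm_nonneg x₀) (hC x₀ hx₀)
      rw [abs_of_pos]
      positivity
    · exact hnu.ne'
  linarith

theorem exists_extreme_lift {d : ℕ} (Qs : Set (Fin d → ℝ)) (hQclosed : IsClosed Qs)
    (hQbd : Bornology.IsBounded Qs) (π : (Fin d → ℝ) →ₗ[ℝ] (Fin 2 → ℝ)) {v₀ : Fin 2 → ℝ}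
    (hv : v₀ ∈ Set.extremePoints ℝ (π '' Qs)) :
    ∃ x, x ∈ Set.extremePoints ℝ Qs ∧ π x = v₀ := by
  obtain ⟨⟨x₁, hx₁Q, hx₁⟩, hvext⟩ := hv
  set Qj := Qs ∩ π ⁻¹' {v₀} with hQj
  have hQjne : Qj.Nonempty := ⟨x₁, hx₁Q, by simp [hx₁]⟩
  have hQjclosed : IsClosed Qj :=
    hQclosed.inter (IsClosed.preimage π.continuous_of_finiteDimensional isClosed_singleton)
  have hQjcompact : IsCompact Qj :=
    Metric.isCompact_of_isClosed_isBounded hQjclosed (hQbd.subset Set.inter_subset_left)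
  obtain ⟨xs, hxs⟩ := hQjcompact.extremePoints_nonempty hQjne
  obtain ⟨⟨hxsQ, hxsfib⟩, hxsext⟩ := hxs
  have hπ : π xs = v₀ := hxsfib
  refine ⟨xs, ⟨hxsQ, ?_⟩, hπ⟩
  intro y₁ hy₁ y₂ hy₂ hseg
  obtain ⟨a, b2, ha, hb2, hab, hsum⟩ := hseg
  have hseg' : v₀ ∈ openSegment ℝ (π y₁) (π y₂) := by
    refine ⟨a, b2, ha, hb2, hab, ?_⟩
    rw [← hπ, ← hsum]
    simp [map_add, _root_.map_smul]
  have hvv : π y₁ = v₀ ∧ π y₂ = v₀ :=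
    ⟨hvext (Set.mem_image_of_mem _ hy₁) (Set.mem_image_of_mem _ hy₂) hseg',
      hvext (Set.mem_image_of_mem _ hy₂) (Set.mem_image_of_mem _ hy₁) (by rwa [openSegment_symm])⟩
  exact hxsext ⟨hy₁, by simp [hvv.1]⟩ ⟨hy₂, by simp [hvv.2]⟩ ⟨a, b2, ha, hb2, hab, hsum⟩

end Polyhedral

section ExtremeAlg

open Matrix

theorem extreme_alg {k d : ℕ} (A : Matrix (Fin k) (Fin d) ℝ) (b : Fin k → ℝ)
    (hb : ∀ i, ∃ q : ℚ, b i = (q : ℝ))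
    {x : Fin d → ℝ} (hx : x ∈ Set.extremePoints ℝ {y : Fin d → ℝ | ∀ i, A.mulVec y i ≤ b i})
    (c : Fin d) :
    IsAlgebraic (FF (Set.range (fun p : Fin k × Fin d => A p.1 p.2))) (x c) := by
  classical
  obtain ⟨hxQ, hxext⟩ := hx
  set T : Finset (Fin k) := Finset.univ.filter (fun i => A.mulVec x i = b i) with hT
  -- Step 1: kernel property
  have hker : ∀ u : Fin d → ℝ, (∀ i ∈ T, A.mulVec u i = 0) → u = 0 := by
    intro u hu
    by_contra hu0
    have hslack : ∀ i, i ∉ T → A.mulVec x i < b i := by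
      intro i hi
      refine lt_of_le_of_ne (hxQ i) ?_
      intro heq
      exact hi (Finset.mem_filter.2 ⟨Finset.mem_univ i, heq⟩)
    set f : Fin k → ℝ := fun i => (b i - A.mulVec x i) / (|A.mulVec u i| + 1) with hf
    set s' : Finset (Fin k) := Finset.univ \ T with hs'
    set ε : ℝ := if h : s'.Nonempty then s'.inf' h f else 1 with hε
    have hmemnot : ∀ i, i ∈ s' ↔ i ∉ T := by
      intro i; simp [hs', Finset.mem_sdiff]
    have hfpos : ∀ i ∈ s', 0 < f i := by
      intro i hi
      have h1 := hslack i ((hmemnot i).1 hi)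
      rw [hf]
      have h2 : (0:ℝ) < |A.mulVec u i| + 1 := by positivity
      exact div_pos (by linarith) h2
    have hεpos : 0 < ε := by
      rw [hε]
      split_ifs with h
      · exact (Finset.lt_inf'_iff h).2 hfpos
      · norm_num
    have hbound : ∀ i, i ∉ T → ε * |A.mulVec u i| ≤ b i - A.mulVec x i := by
      intro i hi
      have his' : i ∈ s' := (hmemnot i).2 hi
      have hεf : ε ≤ f i := by
        rw [hε, dif_pos ⟨i, his'⟩]
        exact Finset.inf'_le f his'
      have h2 : (0:ℝ) < |A.mulVec u i| + 1 := by positivity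
      have h3 : ε * |A.mulVec u i| ≤ f i * |A.mulVec u i| :=
        mul_le_mul_of_nonneg_right hεf (abs_nonneg _)
      refine le_trans h3 ?_
      rw [hf, div_mul_eq_mul_div, div_le_iff₀ h2]
      have h4 : 0 < b i - A.mulVec x i := by have := hslack i hi; linarith
      nlinarith [abs_nonneg (A.mulVec u i)]
    have hmem : ∀ σ : ℝ, |σ| ≤ ε → x + σ • u ∈ {y : Fin d → ℝ | ∀ i, A.mulVec y i ≤ b i} := by
      intro σ hσ i
      rw [Matrix.mulVec_add, Matrix.mulVec_smul]
      simp only [Pi.add_apply, Pi.smul_apply, smul_eq_mul]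
      by_cases hiT : i ∈ T
      · rw [hu i hiT, mul_zero, add_zero]
        exact hxQ i
      · have h1 := hbound i hiT
        have h2 : σ * A.mulVec u i ≤ ε * |A.mulVec u i| := by
          calc σ * A.mulVec u i ≤ |σ * A.mulVec u i| := le_abs_self _
            _ = |σ| * |A.mulVec u i| := abs_mul _ _
            _ ≤ ε * |A.mulVec u i| := mul_le_mul_of_nonneg_right hσ (abs_nonneg _)
        linarith
    have h₁ := hmem ε (by rw [abs_of_pos hεpos])
    have h₂ := hmem (-ε) (by rw [abs_neg, abs_of_pos hεpos])
    have hseg : x ∈ openSegment ℝ (x + (-ε) • u) (x + ε • u) := by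
      refine ⟨1/2, 1/2, by norm_num, by norm_num, by norm_num, ?_⟩
      module
    have hcon := hxext h₂ h₁ hseg
    have h5 : x + ε • u = x := hxext h₁ h₂ (by rwa [openSegment_symm] at hseg)
    have h6 : ε • u = 0 := by
      have := congrArg (fun z => z - x) h5
      simpa [add_sub_cancel_left] using this
    rcases smul_eq_zero.1 h6 with h7 | h7
    · exact hεpos.ne' h7
    · exact hu0 h7
  -- Step 2: rows indexed by T span everything
  set M1 : Matrix {i // i ∈ T} (Fin d) ℝ := Matrix.of (fun i j => A (i : Fin k) j) with hM1
  have hinj : Function.Injective M1.mulVecLin := by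
    rw [← LinearMap.ker_eq_bot, Submodule.eq_bot_iff]
    intro u hu
    refine hker u ?_
    intro i hiT
    have h1 : M1.mulVec u = 0 := hu
    have h2 := congrFun h1 ⟨i, hiT⟩
    exact h2
  have hrank : M1.rank = d := by
    have h1 := LinearMap.finrank_range_add_finrank_ker M1.mulVecLin
    rw [LinearMap.ker_eq_bot.2 hinj] at h1
    simp only [finrank_bot, add_zero, Module.finrank_fin_fun] at h1
    rw [Matrix.rank, h1]
  have hspan : Submodule.span ℝ (Set.range M1.row) = ⊤ := by
    refine Submodule.eq_top_of_finrank_eq ?_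
    rw [← Matrix.rank_eq_finrank_span_row, hrank, Module.finrank_fin_fun]
  -- Step 3: extract a basis among rows
  obtain ⟨tb, htbsub, htbspan, htbli⟩ := exists_linearIndependent ℝ (Set.range M1.row)
  rw [hspan] at htbspan
  have htbfin : tb.Finite := Set.Finite.subset (Set.finite_range _) htbsub
  letI := htbfin.fintype
  set bb : Module.Basis tb ℝ (Fin d → ℝ) := Module.Basis.mk htbli (by rw [Subtype.range_coe, htbspan]) with hbb
  have hcard : Fintype.card tb = d := by
    have h1 := Module.finrank_eq_card_basis bb
    rw [Module.finrank_fin_fun] at h1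
    omega
  obtain ⟨e⟩ : Nonempty (Fin d ≃ tb) := ⟨Fintype.equivOfCardEq (by simp [hcard])⟩
  have hchoice : ∀ z : tb, ∃ i : {i // i ∈ T}, M1 i = (z : Fin d → ℝ) := fun z => htbsub z.2
  choose idx hidx using hchoice
  set S : Fin d → Fin k := fun p => (idx (e p) : Fin k) with hS
  set M : Matrix (Fin d) (Fin d) ℝ := Matrix.of (fun p q => A (S p) q) with hM
  have hMrow : ∀ p, M p = ((e p : tb) : Fin d → ℝ) := by
    intro p
    have := hidx (e p)
    exact this
  have hMli : LinearIndependent ℝ (fun p => M p) := by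
    have heq : (fun p => M p) = (fun p : Fin d => ((e p : tb) : Fin d → ℝ)) :=
      funext hMrow
    rw [heq]
    exact htbli.comp e e.injective
  have hMunit : IsUnit M := Matrix.linearIndependent_rows_iff_isUnit.1 hMli
  have hdet : M.det ≠ 0 := by
    intro h0
    rw [Matrix.isUnit_iff_isUnit_det, h0] at hMunit
    simpa using hMunit
  have hSpT : ∀ p, S p ∈ T := fun p => (idx (e p)).2
  have hMx : M.mulVec x = fun p => b (S p) := by
    funext p
    have h1 : A.mulVec x (S p) = b (S p) := (Finset.mem_filter.1 (hSpT p)).2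
    exact h1
  have hcramer : M.det • x = M.adjugate.mulVec (fun p => b (S p)) := by
    rw [← hMx, Matrix.mulVec_mulVec, Matrix.adjugate_mul, Matrix.smul_mulVec,
      Matrix.one_mulVec]
  set R₀ : Subalgebra ℚ ℝ :=
    Algebra.adjoin ℚ (Set.range (fun p : Fin k × Fin d => A p.1 p.2)) with hR₀
  have hent : ∀ i j, A i j ∈ R₀ := fun i j => Algebra.subset_adjoin ⟨(i, j), rfl⟩
  have hbmem : ∀ i, b i ∈ R₀ := by
    intro i
    obtain ⟨q, hq⟩ := hb i
    rw [hq]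
    have : ((q : ℝ)) = algebraMap ℚ ℝ q := by norm_num
    rw [this]
    exact Subalgebra.algebraMap_mem R₀ q
  have hdetmem : M.det ∈ R₀ := det_mem M R₀ (fun p q => hent (S p) q)
  have hadjmem : ∀ p q, M.adjugate p q ∈ R₀ := by
    intro p q
    rw [Matrix.adjugate_apply]
    refine det_mem _ R₀ ?_
    intro i j
    by_cases hiq : i = q
    · rw [hiq, Matrix.updateRow_self]
      by_cases hjp : j = p
      · rw [hjp, Pi.single_eq_same]
        exact Subalgebra.one_mem R₀
      · rw [Pi.single_eq_of_ne hjp]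
        exact Subalgebra.zero_mem R₀
    · rw [Matrix.updateRow_ne hiq]
      exact hent _ _
  have hrhs : M.adjugate.mulVec (fun p => b (S p)) c ∈ R₀ := by
    have h1 : M.adjugate.mulVec (fun p => b (S p)) c =
        ∑ p, M.adjugate c p * b (S p) := rfl
    rw [h1]
    exact Subalgebra.sum_mem _ fun p _ =>
      Subalgebra.mul_mem _ (hadjmem c p) (hbmem (S p))
  have hcc : M.det * x c = M.adjugate.mulVec (fun p => b (S p)) c := by
    have := congrFun hcramer c
    simpa using this
  have halgR : IsAlgebraic R₀ (x c) := by
    refine ⟨Polynomial.C (⟨M.det, hdetmem⟩ : R₀) * Polynomial.X -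
      Polynomial.C (⟨_, hrhs⟩ : R₀), ?_, ?_⟩
    · intro h0
      have h1 := congrArg (fun p => Polynomial.coeff p 1) h0
      simp only [Polynomial.coeff_sub, Polynomial.coeff_C_mul, Polynomial.coeff_X_one,
        mul_one, Polynomial.coeff_C, Polynomial.coeff_zero] at h1
      norm_num at h1
      exact hdet (congrArg Subtype.val h1)
    · simp only [map_sub, _root_.map_mul, Polynomial.aeval_C, Polynomial.aeval_X]
      have hav : ∀ r : R₀, (algebraMap R₀ ℝ) r = (r : ℝ) := fun r => rfl
      rw [hav, hav]
      simp only [sub_eq_zero]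
      exact hcc
  rw [isAlgebraic_IF_iff]
  refine polyAlg_mono ?_ ((isAlgebraic_SA_iff R₀ (x c)).1 halgR)
  intro z hz
  exact IntermediateField.algebra_adjoin_le_adjoin ℚ _ hz

end ExtremeAlg


/-- A generic convex `n`-gon (vertices in convex position whose `2n` coordinates are
algebraically independent over `ℚ`) has extension complexity at least `√(2n)`: any
bounded nonempty polyhedron `{x : Ax ≤ b}` projecting onto it via the projection onto
the first two coordinates satisfies `k² ≥ 2n`, hence `k ≥ √(2n)`. -/
theorem stmt5 {n d k : ℕ} (hn : 3 ≤ n) (hd : 2 ≤ d)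
    (v : Fin n → (Fin 2 → ℝ))
    (hext : ∀ j, v j ∈ Set.extremePoints ℝ (convexHull ℝ (Set.range v)))
    (halg : AlgebraicIndependent ℚ (fun p : Fin n × Fin 2 => v p.1 p.2))
    (A : Matrix (Fin k) (Fin d) ℝ) (b : Fin k → ℝ)
    (hne : {x : Fin d → ℝ | ∀ i, A.mulVec x i ≤ b i}.Nonempty)
    (hbd : Bornology.IsBounded {x : Fin d → ℝ | ∀ i, A.mulVec x i ≤ b i})
    (hproj : (fun (x : Fin d → ℝ) (i : Fin 2) => x (Fin.castLE hd i)) ''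
        {x : Fin d → ℝ | ∀ i, A.mulVec x i ≤ b i} = convexHull ℝ (Set.range v)) :
    2 * n ≤ k ^ 2 ∧ Real.sqrt (2 * n) ≤ (k : ℝ) := by
  classical
  -- normalize the rows
  set A' : Matrix (Fin k) (Fin d) ℝ :=
    Matrix.of (fun i j => if b i = 0 then A i j else A i j / |b i|) with hA'
  set b' : Fin k → ℝ := fun i => if b i = 0 then 0 else b i / |b i| with hb'
  have hb'rat : ∀ i, ∃ q : ℚ, b' i = (q : ℝ) := by
    intro i
    by_cases h0 : b i = 0
    · refine ⟨0, ?_⟩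
      show (if b i = 0 then (0:ℝ) else b i / |b i|) = ((0 : ℚ) : ℝ)
      rw [if_pos h0]
      norm_num
    · rcases lt_or_gt_of_ne h0 with hlt | hgt
      · refine ⟨-1, ?_⟩
        show (if b i = 0 then (0:ℝ) else b i / |b i|) = ((-1 : ℚ) : ℝ)
        rw [if_neg h0, abs_of_neg hlt, div_neg, div_self h0]
        norm_num
      · refine ⟨1, ?_⟩
        show (if b i = 0 then (0:ℝ) else b i / |b i|) = ((1 : ℚ) : ℝ)
        rw [if_neg h0, abs_of_pos hgt, div_self h0]
        norm_num
  have hmv : ∀ (x : Fin d → ℝ) i,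
      A'.mulVec x i = if b i = 0 then A.mulVec x i else A.mulVec x i / |b i| := by
    intro x i
    by_cases h0 : b i = 0
    · simp only [if_pos h0, Matrix.mulVec, dotProduct, hA', Matrix.of_apply]
    · simp only [if_neg h0, Matrix.mulVec, dotProduct, hA', Matrix.of_apply,
        Finset.sum_div]
      exact Finset.sum_congr rfl fun j _ => div_mul_eq_mul_div _ _ _
  have hQeq : {x : Fin d → ℝ | ∀ i, A.mulVec x i ≤ b i} =
      {x : Fin d → ℝ | ∀ i, A'.mulVec x i ≤ b' i} := by
    ext x
    simp only [Set.mem_setOf_eq]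
    refine forall_congr' fun i => ?_
    rw [hmv x i]
    by_cases h0 : b i = 0
    · rw [if_pos h0]
      have hb0 : b' i = 0 := by
        show (if b i = 0 then (0:ℝ) else b i / |b i|) = 0
        rw [if_pos h0]
      rw [hb0, h0]
    · rw [if_neg h0]
      have hb1 : b' i = b i / |b i| := by
        show (if b i = 0 then (0:ℝ) else b i / |b i|) = b i / |b i|
        rw [if_neg h0]
      have habs : 0 < |b i| := abs_pos.2 h0
      rw [hb1, div_le_div_iff_of_pos_right habs]
  rw [hQeq] at hne hbd hproj
  have hdk : d ≤ k := d_le_k A' b' hne hbd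
  -- projection as a linear map
  set π : (Fin d → ℝ) →ₗ[ℝ] (Fin 2 → ℝ) := LinearMap.funLeft ℝ ℝ (Fin.castLE hd) with hπ
  have hπeq : ⇑π = (fun (x : Fin d → ℝ) (i : Fin 2) => x (Fin.castLE hd i)) := rfl
  -- closedness
  have hclosed : IsClosed {x : Fin d → ℝ | ∀ i, A'.mulVec x i ≤ b' i} := by
    have : {x : Fin d → ℝ | ∀ i, A'.mulVec x i ≤ b' i} =
        ⋂ i, {x : Fin d → ℝ | A'.mulVec x i ≤ b' i} := by
      ext x; simp [Set.mem_iInter]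
    rw [this]
    refine isClosed_iInter fun i => ?_
    have hcont : Continuous (fun x : Fin d → ℝ => A'.mulVec x i) := by
      have : (fun x : Fin d → ℝ => A'.mulVec x i) =
          ⇑((LinearMap.proj i).comp (Matrix.mulVecLin A')) := rfl
      rw [this]
      exact LinearMap.continuous_of_finiteDimensional _
    exact isClosed_le hcont continuous_const
  -- lift each vertex to an extreme point
  have hlift : ∀ j : Fin n, ∃ x, x ∈ Set.extremePoints ℝ
      {x : Fin d → ℝ | ∀ i, A'.mulVec x i ≤ b' i} ∧ π x = v j := by
    intro j
    refine exists_extreme_lift _ hclosed hbd π ?_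
    rw [hπeq, hproj]
    exact hext j
  choose xe hxe hπxe using hlift
  -- each coordinate of each vertex is algebraic over the entries
  set g : Fin k × Fin d → ℝ := fun p => A' p.1 p.2 with hg
  have hcoordalg : ∀ p : Fin n × Fin 2, IsAlgebraic (FF (Set.range g)) (v p.1 p.2) := by
    intro p
    have h1 : v p.1 p.2 = xe p.1 (Fin.castLE hd p.2) := by
      rw [← hπxe p.1, hπeq]
    rw [h1]
    exact extreme_alg A' b' hb'rat (hxe p.1) (Fin.castLE hd p.2)
  -- counting
  have hcount := card_le_count (fun p : Fin n × Fin 2 => v p.1 p.2) halg g hcoordalg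
  rw [Fintype.card_prod, Fintype.card_prod, Fintype.card_fin, Fintype.card_fin,
    Fintype.card_fin, Fintype.card_fin] at hcount
  have hmain : 2 * n ≤ k ^ 2 := by
    have h1 : k * d ≤ k * k := Nat.mul_le_mul_left k hdk
    have h2 : k ^ 2 = k * k := sq k
    omega
  refine ⟨hmain, ?_⟩
  have h3 : ((2 * n : ℕ) : ℝ) ≤ ((k ^ 2 : ℕ) : ℝ) := Nat.cast_le.2 hmain
  have h4 : Real.sqrt ((2 : ℝ) * n) ≤ Real.sqrt ((k : ℝ) ^ 2) := by
    apply Real.sqrt_le_sqrt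
    push_cast at h3
    convert h3 using 2
  rw [Real.sqrt_sq (by positivity : (0:ℝ) ≤ (k : ℝ))] at h4
  exact h4
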